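/- arXiv:1101.1883 — 3 statements merged into one kernel-verified Lean document; each statement's English description precedes it below -/
import Mathlib

section
/- Let A be a Noetherian integral domain and 𝔭 ⊂ A a prime ideal such that the quotient A/𝔭 has Krull dimension 1. Fix f ∈ A_𝔭 (the localization at 𝔭, viewed inside Frac A) and an integer r ≥ 1. Then for all but finitely many maximal ideals 𝔪 of A containing 𝔭, one has f ∈ A_𝔪 + 𝔭^r A_𝔭 (as subgroups of Frac A). -/
/-- The localization `A_q` of a domain `A` at (the complement of) a prime `q`,
viewed as a subset of the fraction field `K`. -/
def locAt (A K : Type*) [CommRing A] [Field K] [Algebra A K] (q : Ideal A) :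
    Set K :=
  {x : K | ∃ a s : A, s ∉ q ∧ x * algebraMap A K s = algebraMap A K a}

/-- The subset `I·A_q ⊆ K` generated by an ideal `I` in the localization of `A`
at the prime `q`, viewed inside the fraction field `K`. -/
def idealLocAt (A K : Type*) [CommRing A] [Field K] [Algebra A K]
    (I q : Ideal A) : Set K :=
  {x : K | ∃ a s : A, a ∈ I ∧ s ∉ q ∧ x * algebraMap A K s = algebraMap A K a}

/-- Minimal primes over an ideal in a Noetherian ring form a finite set. -/
theorem finite_minimalPrimes_aux {A : Type*} [CommRing A] [IsNoetherianRing A]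
    (J : Ideal A) : J.minimalPrimes.Finite := by
  rw [Ideal.minimalPrimes_eq_comap]
  exact (minimalPrimes.finite_of_isNoetherianRing (A ⧸ J)).image _

/-- Let `A` be a Noetherian integral domain and `𝔭 ⊂ A` a prime ideal such that
`A/𝔭` has Krull dimension 1.  Fix `f ∈ A_𝔭` (inside `Frac A`) and `r ≥ 1`.
Then for all but finitely many maximal ideals `𝔪 ⊇ 𝔭` one has
`f ∈ A_𝔪 + 𝔭^r A_𝔭` inside `Frac A`. -/
theorem stmt_1 (A : Type*) [CommRing A] [IsDomain A] [IsNoetherianRing A]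
    (K : Type*) [Field K] [Algebra A K] [IsFractionRing A K]
    (p : Ideal A) (hp : p.IsPrime) (hdim : ringKrullDim (A ⧸ p) = 1)
    (f : K) (hf : f ∈ locAt A K p) (r : ℕ) (hr : 1 ≤ r) :
    {m : Ideal A | m.IsMaximal ∧ p ≤ m ∧
      ¬ ∃ g h : K, g ∈ locAt A K m ∧ h ∈ idealLocAt A K (p ^ r) p ∧
        f = g + h}.Finite := by
  obtain ⟨a, s, hs, hfs⟩ := hf
  set J : Ideal A := p ⊔ Ideal.span {s} with hJ
  apply (finite_minimalPrimes_aux J).subset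
  rintro m ⟨hm, hpm, hbad⟩
  -- first, s ∈ m, otherwise f ∈ locAt m and we can take g = f, h = 0
  have hsm : s ∈ m := by
    by_contra hsm
    exact hbad ⟨f, 0, ⟨a, s, hsm, hfs⟩,
      ⟨0, 1, zero_mem _, fun h1 => hp.ne_top ((Ideal.eq_top_iff_one p).mpr h1), by simp⟩, by ring⟩
  -- hence m ⊇ J
  have hJm : J ≤ m := sup_le hpm (by rwa [Ideal.span_le, Set.singleton_subset_iff])
  -- m is a minimal prime over J, since any prime strictly between would give a
  -- chain of length 2 in Spec (A ⧸ p)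
  refine ⟨⟨hm.isPrime, hJm⟩, ?_⟩
  rintro q ⟨hq, hJq⟩ hqm
  by_contra hne
  have hne' : q ≠ m := fun h => hne (h ▸ le_rfl)
  have hqm' : q < m := lt_of_le_of_ne hqm hne'
  have hpq : p ≤ q := le_trans le_sup_left hJq
  have hsq : s ∈ q := hJq (le_sup_right (α := Ideal A)
    (Ideal.subset_span (Set.mem_singleton s)))
  -- build primes in A ⧸ p
  let π := Ideal.Quotient.mk p
  have hsurj : Function.Surjective π := Ideal.Quotient.mk_surjective
  have hker : RingHom.ker π = p := Ideal.mk_ker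
  have hqP : (q.map π).IsPrime := Ideal.map_isPrime_of_surjective hsurj (by rw [hker]; exact hpq)
  have hmP : (m.map π).IsPrime := Ideal.map_isPrime_of_surjective hsurj (by rw [hker]; exact hpm)
  have hcq : Ideal.comap π (q.map π) = q := by
    rw [Ideal.comap_map_of_surjective π hsurj, ← RingHom.ker_eq_comap_bot, hker, sup_eq_left.mpr hpq]
  have hcm : Ideal.comap π (m.map π) = m := by
    rw [Ideal.comap_map_of_surjective π hsurj, ← RingHom.ker_eq_comap_bot, hker, sup_eq_left.mpr hpm]
  have hlt2 : q.map π < m.map π := by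
    refine lt_of_le_of_ne (Ideal.map_mono hqm'.le) ?_
    intro h
    exact hne' (by rw [← hcq, h, hcm])
  have hbot : (⊥ : Ideal (A ⧸ p)) < q.map π := by
    refine bot_lt_iff_ne_bot.mpr ?_
    intro h
    have : π s ∈ q.map π := Ideal.mem_map_of_mem π hsq
    rw [h, Ideal.mem_bot] at this
    exact hs (Ideal.Quotient.eq_zero_iff_mem.mp this)
  -- the chain ⊥ < q.map π < m.map π in PrimeSpectrum (A ⧸ p) has length 2
  haveI : Ideal.IsPrime (⊥ : Ideal (A ⧸ p)) := by
    haveI : IsDomain (A ⧸ p) := Ideal.Quotient.isDomain p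
    exact Ideal.bot_prime
  let x0 : PrimeSpectrum (A ⧸ p) := ⟨⊥, inferInstance⟩
  let x1 : PrimeSpectrum (A ⧸ p) := ⟨q.map π, hqP⟩
  let x2 : PrimeSpectrum (A ⧸ p) := ⟨m.map π, hmP⟩
  have h01 : x0 < x1 := hbot
  have h12 : x1 < x2 := hlt2
  let c : LTSeries (PrimeSpectrum (A ⧸ p)) :=
    ((RelSeries.singleton _ x2).cons x1 h12).cons x0 (by exact h01)
  have hlen : (c.length : WithBot (WithTop ℕ)) ≤ ringKrullDim (A ⧸ p) :=
    Order.LTSeries.length_le_krullDim c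
  rw [hdim] at hlen
  have : c.length = 2 := rfl
  rw [this] at hlen
  norm_num at hlen
  exact absurd hlen (by norm_cast)
end

section
/- Let K be a field of characteristic zero and u ∈ K[[t]] a power series with u(0) = 0 and u'(0) ≠ 0 (i.e. u is another uniformizer of K[[t]]). Then for every Laurent series f ∈ K((t)), the coefficient of t^{−1} in f equals the coefficient of t^{−1} in (f ∘ u)·u', where f ∘ u denotes substitution of u into f. In other words, the residue map res(f dt) = coeff_{t^{−1}}(f) on Ω_{K((t))/K} is independent of the choice of uniformizer. -/
open PowerSeries

/-- Formal derivative of a Laurent series. -/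
noncomputable def lsDeriv {R : Type*} [CommRing R] (g : LaurentSeries R) :
    LaurentSeries R where
  coeff n := (n + 1) • g.coeff (n + 1)
  isPWO_support' := by
    have h1 : Function.support (fun n : ℤ => (n + 1) • g.coeff (n + 1))
        ⊆ (fun n : ℤ => n - 1) '' Function.support g.coeff := by
      intro n hn
      exact ⟨n + 1, fun h0 => hn (by simp [Function.mem_support, h0]), by ring⟩
    exact ((g.isPWO_support').image_of_monotone (fun _ _ h => by omega)).mono h1

/-- Substitution of a power series `u` with zero constant term into a power
series `g` (`g ∘ u`), defined coefficientwise by finite sums. -/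
noncomputable def psComp (K : Type*) [CommRing K] (u g : PowerSeries K) :
    PowerSeries K :=
  PowerSeries.mk fun m =>
    ∑ n ∈ Finset.range (m + 1), (coeff n g) * (coeff m (u ^ n))

namespace ResAux

variable {K : Type*} [Field K]

lemma coe_coeff_neg (p : PowerSeries K) {n : ℤ} (hn : n < 0) :
    ((p : LaurentSeries K)).coeff n = 0 := by
  rw [HahnSeries.ofPowerSeries_apply]
  apply HahnSeries.embDomain_notin_range
  rintro ⟨m, hm⟩
  simp only [Nat.castOrderEmbedding_apply] at hm
  omega

lemma lsDeriv_coe (p : PowerSeries K) :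
    lsDeriv (p : LaurentSeries K) = ((d⁄dX K p : PowerSeries K) : LaurentSeries K) := by
  ext n
  show (n + 1) • (p : LaurentSeries K).coeff (n + 1) = _
  rcases n with m | m
  · have h1 : (Int.ofNat m) + 1 = ((m + 1 : ℕ) : ℤ) := by simp
    rw [h1, Int.ofNat_eq_coe, HahnSeries.ofPowerSeries_apply_coeff,
      HahnSeries.ofPowerSeries_apply_coeff, coeff_derivative, zsmul_eq_mul]
    push_cast
    ring
  · rw [coe_coeff_neg _ (by rw [Int.negSucc_eq]; omega : (Int.negSucc m) < 0)]
    rcases Nat.eq_zero_or_pos m with h | h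
    · subst h
      have : (Int.negSucc 0) + 1 = 0 := by decide
      rw [this, zero_smul]
    · rw [coe_coeff_neg _ (by rw [Int.negSucc_eq]; omega : (Int.negSucc m) + 1 < 0), smul_zero]

lemma sum_coeff {α : Type*} (s : Finset α) (f : α → LaurentSeries K) (n : ℤ) :
    (∑ a ∈ s, f a).coeff n = ∑ a ∈ s, (f a).coeff n :=
  map_sum (AddMonoidHom.mk' (fun x : LaurentSeries K => x.coeff n)
    (fun _ _ => HahnSeries.coeff_add)) f s

/-- If `p * q = 1` in `K⟦X⟧`, then `(X * p : LS)^(-(k+1)) = single (-(k+1)) 1 * q^(k+1)`. -/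
lemma zpow_neg_eq (p q : PowerSeries K) (hpq : p * q = 1) (k : ℕ) :
    (((X * p : PowerSeries K) : LaurentSeries K)) ^ (-(k + 1 : ℤ)) =
      HahnSeries.single (-(k + 1 : ℤ)) (1 : K) * ((q ^ (k + 1) : PowerSeries K) : LaurentSeries K) := by
  have h1 : (-(k + 1 : ℤ)) = -((k + 1 : ℕ) : ℤ) := by push_cast; ring
  rw [h1, zpow_neg, zpow_natCast]
  apply inv_eq_of_mul_eq_one_left
  have hX : ((X * p : PowerSeries K) : LaurentSeries K) ^ (k + 1)
      = HahnSeries.single ((k + 1 : ℕ) : ℤ) (1 : K) * ((p ^ (k + 1) : PowerSeries K) : LaurentSeries K) := by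
    rw [show ((X * p : PowerSeries K) : LaurentSeries K)
        = (HahnSeries.ofPowerSeries ℤ K) (X * p) from rfl, map_mul,
      HahnSeries.ofPowerSeries_X, mul_pow, HahnSeries.single_pow, ← map_pow]
    norm_num
  rw [hX, mul_mul_mul_comm, HahnSeries.single_mul_single, ← map_mul, ← mul_pow,
    mul_comm q p, hpq, one_pow, map_one, mul_one, one_mul]
  rw [neg_add_cancel, HahnSeries.single_zero_one]

lemma ps_key (v w : PowerSeries K) [CharZero K] (hvw : v * w = 1) (k : ℕ) :
    coeff k (w ^ (k + 1) * d⁄dX K (X * v)) = if k = 0 then 1 else 0 := by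
  have hdv : d⁄dX K (X * v) = v + X * d⁄dX K v := by
    rw [Derivation.leibniz, smul_eq_mul, smul_eq_mul, derivative_X, mul_one, add_comm]
  have hsplit : w ^ (k + 1) * d⁄dX K (X * v) = w ^ k + X * (d⁄dX K v * w ^ (k + 1)) := by
    rw [hdv, mul_add]
    have h2 : w ^ (k + 1) * v = w ^ k := by
      rw [pow_succ, mul_assoc, mul_comm w v, hvw, mul_one]
    rw [h2]; ring
  rw [hsplit, map_add]
  rcases k with _ | m
  · simp [coeff_zero_eq_constantCoeff_apply]
  · rw [if_neg (Nat.succ_ne_zero m), coeff_succ_X_mul]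
    -- need : coeff (m+1) (w^(m+1)) + coeff m (dv * w^(m+2)) = 0
    have h3 : v * d⁄dX K w + w * d⁄dX K v = 0 := by
      have := congrArg (d⁄dX K) hvw
      rwa [Derivation.leibniz, smul_eq_mul, smul_eq_mul, Derivation.map_one_eq_zero] at this
    have hdw : d⁄dX K w = -(w ^ 2 * d⁄dX K v) := by
      have h4 : v * d⁄dX K w = -(w * d⁄dX K v) := by linear_combination h3
      calc d⁄dX K w = (v * w) * d⁄dX K w := by rw [hvw, one_mul]
        _ = w * (v * d⁄dX K w) := by ring
        _ = w * (-(w * d⁄dX K v)) := by rw [h4]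
        _ = -(w ^ 2 * d⁄dX K v) := by ring
    have hpow : d⁄dX K (w ^ (m + 1)) = -((m + 1 : ℕ) • (d⁄dX K v * w ^ (m + 2))) := by
      rw [Derivation.leibniz_pow, Nat.add_sub_cancel, smul_eq_mul, hdw]
      have hr : w ^ m * -(w ^ 2 * d⁄dX K v) = -(d⁄dX K v * w ^ (m + 2)) := by ring
      rw [hr, smul_neg]
    have h5 := congrArg (coeff m) hpow
    rw [coeff_derivative, map_neg, map_nsmul, nsmul_eq_mul] at h5
    have h6 : ((m : K) + 1) ≠ 0 := by
      have : ((m + 1 : ℕ) : K) ≠ 0 := Nat.cast_ne_zero.mpr (Nat.succ_ne_zero m)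
      push_cast at this; exact this
    have h7 : coeff (m + 1) (w ^ (m + 1)) * ((m : K) + 1)
        = -(((m + 1 : ℕ) : K) * coeff m (d⁄dX K v * w ^ (m + 2))) := by
      push_cast at h5 ⊢; linear_combination h5
    have h8 : (coeff (m + 1) (w ^ (m + 1))
        + coeff m (d⁄dX K v * w ^ (m + 2))) * ((m : K) + 1) = 0 := by
      push_cast at h7 ⊢; linear_combination h7
    exact (mul_eq_zero.mp h8).resolve_right h6

end ResAux

open ResAux in
/-- Let `K` be a field of characteristic zero and `u ∈ K[[t]]` with `u(0) = 0`
and `u'(0) ≠ 0` (another uniformizer).  For every Laurent series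
`f ∈ K((t))`, written as `f = g + Σ_{k=1}^N c_k t^(−k)` with `g ∈ K[[t]]`,
the coefficient of `t^(−1)` in `f` equals the coefficient of `t^(−1)` in
`(f ∘ u)·u'`: the residue is independent of the choice of uniformizer. -/
theorem stmt_11 (K : Type*) [Field K] [CharZero K] (u : PowerSeries K)
    (h0 : constantCoeff u = 0) (h1 : coeff 1 u ≠ 0)
    (g : PowerSeries K) (N : ℕ) (c : ℕ → K) :
    (((g : LaurentSeries K) +
        ∑ k ∈ Finset.range N,
          c (k + 1) • ((PowerSeries.X : PowerSeries K) : LaurentSeries K)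
            ^ (-(k + 1 : ℤ))).coeff (-1))
    = ((((psComp K u g : PowerSeries K) : LaurentSeries K) +
        ∑ k ∈ Finset.range N,
          c (k + 1) • ((u : LaurentSeries K)) ^ (-(k + 1 : ℤ)))
        * lsDeriv (u : LaurentSeries K)).coeff (-1) := by
  classical
  -- the power series `v` with `u = X * v`
  set v : PowerSeries K := PowerSeries.mk (fun n => coeff (n + 1) u) with hv
  have huv : u = X * v := by
    ext n
    rcases n with _ | n
    · rw [coeff_zero_eq_constantCoeff_apply, h0, coeff_zero_eq_constantCoeff_apply]
      rw [map_mul, constantCoeff_X, zero_mul]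
    · rw [coeff_succ_X_mul, hv, coeff_mk]
  have hv0 : constantCoeff v ≠ 0 := by
    rw [← coeff_zero_eq_constantCoeff_apply, hv, coeff_mk]
    exact h1
  set w : PowerSeries K := v⁻¹ with hw
  have hvw : v * w = 1 := PowerSeries.mul_inv_cancel v hv0
  -- the key per-term residue
  have hterm : ∀ k : ℕ,
      ((u : LaurentSeries K) ^ (-(k + 1 : ℤ)) * lsDeriv (u : LaurentSeries K)).coeff (-1)
        = if k = 0 then 1 else 0 := by
    intro k
    rw [huv, lsDeriv_coe, zpow_neg_eq v w hvw k, mul_assoc, ← map_mul]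
    have hm1 : (-1 : ℤ) = (k : ℤ) + (-(k + 1 : ℤ)) := by ring
    rw [hm1, HahnSeries.coeff_single_mul_add, one_mul, HahnSeries.ofPowerSeries_apply_coeff]
    exact ps_key v w hvw k
  -- LHS computation
  have hX : ∀ k : ℕ, (((PowerSeries.X : PowerSeries K) : LaurentSeries K)
      ^ (-(k + 1 : ℤ))).coeff (-1) = if k = 0 then 1 else 0 := by
    intro k
    have : (X : PowerSeries K) = X * 1 := by rw [mul_one]
    rw [this, zpow_neg_eq (1 : PowerSeries K) 1 (by rw [mul_one]) k, one_pow,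
      RingHom.map_one, mul_one, HahnSeries.coeff_single]
    by_cases h : k = 0
    · subst h; norm_num
    · rw [if_neg (by omega), if_neg h]
  have hLHS : (((g : LaurentSeries K) +
      ∑ k ∈ Finset.range N,
        c (k + 1) • ((PowerSeries.X : PowerSeries K) : LaurentSeries K)
          ^ (-(k + 1 : ℤ))).coeff (-1))
      = ∑ k ∈ Finset.range N, c (k + 1) * (if k = 0 then 1 else 0) := by
    rw [HahnSeries.coeff_add, coe_coeff_neg g (by norm_num), zero_add, sum_coeff]
    refine Finset.sum_congr rfl fun k _ => ?_
    rw [HahnSeries.coeff_smul, hX k, smul_eq_mul]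
  -- RHS computation
  have hRHS : ((((psComp K u g : PowerSeries K) : LaurentSeries K) +
        ∑ k ∈ Finset.range N,
          c (k + 1) • ((u : LaurentSeries K)) ^ (-(k + 1 : ℤ)))
        * lsDeriv (u : LaurentSeries K)).coeff (-1)
      = ∑ k ∈ Finset.range N, c (k + 1) * (if k = 0 then 1 else 0) := by
    rw [add_mul, HahnSeries.coeff_add]
    have hA : (((psComp K u g : PowerSeries K) : LaurentSeries K)
        * lsDeriv (u : LaurentSeries K)).coeff (-1) = 0 := by
      rw [lsDeriv_coe, ← map_mul]
      exact coe_coeff_neg _ (by norm_num)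
    rw [hA, zero_add, Finset.sum_mul, sum_coeff]
    refine Finset.sum_congr rfl fun k _ => ?_
    rw [← HahnSeries.C_mul_eq_smul, mul_assoc, HahnSeries.C_mul_eq_smul,
      HahnSeries.coeff_smul, hterm k, smul_eq_mul]
  rw [hLHS, hRHS]
end

section
/- Let L/K be a finite field extension. Identify L((t)) as a finite field extension of K((t)) of the same degree. Then for every f = Σ_n a_n t^n ∈ L((t)), the trace Tr_{L((t))/K((t))}(f) is the Laurent series Σ_n Tr_{L/K}(a_n) t^n; i.e. the trace of L((t))/K((t)) is computed coefficientwise by the trace of L/K. -/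
noncomputable section

open HahnSeries Finset

namespace Stmt12Aux

variable {K L : Type*} [Field K] [Field L] [Algebra K L] [FiniteDimensional K L]
  [Algebra (LaurentSeries K) (LaurentSeries L)]

variable {ι : Type*} [Fintype ι] [DecidableEq ι]

/-- Coefficientwise coordinates. -/
def reprFun (b : Module.Basis ι K L) (f : LaurentSeries L) : ι → LaurentSeries K :=
  fun i => f.map (b.coord i)

@[simp] lemma reprFun_coeff (b : Module.Basis ι K L) (f : LaurentSeries L) (i : ι) (n : ℤ) :
    (reprFun b f i).coeff n = b.repr (f.coeff n) i := rfl

/-- Coefficientwise reconstruction. -/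
def recFun (b : Module.Basis ι K L) (c : ι → LaurentSeries K) : LaurentSeries L :=
  ∑ i, (c i).map (LinearMap.toSpanSingleton K L (b i))

lemma sum_coeff {M α : Type*} [AddCommMonoid M] (s : Finset α) (F : α → HahnSeries ℤ M)
    (n : ℤ) : (∑ i ∈ s, F i).coeff n = ∑ i ∈ s, (F i).coeff n :=
  map_sum (coeff.addMonoidHom n) F s

lemma recFun_coeff (b : Module.Basis ι K L) (c : ι → LaurentSeries K) (n : ℤ) :
    (recFun b c).coeff n = ∑ i, (c i).coeff n • b i := by
  rw [recFun, sum_coeff]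
  rfl

variable (hcompat : ∀ (g : LaurentSeries K) (n : ℤ),
    ((algebraMap (LaurentSeries K) (LaurentSeries L)) g).coeff n
      = algebraMap K L (g.coeff n))

include hcompat in
lemma smul_coeff' (g : LaurentSeries K) (f : LaurentSeries L) (i : ι) (b : Module.Basis ι K L) (n : ℤ) :
    b.repr ((g • f).coeff n) i = (g * reprFun b f i).coeff n := by
  have hsmul : g • f = algebraMap (LaurentSeries K) (LaurentSeries L) g * f :=
    Algebra.smul_def g f
  set A := algebraMap (LaurentSeries K) (LaurentSeries L) g with hA
  have hAsupp : A.support ⊆ g.support := by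
    intro m hm
    simp only [HahnSeries.mem_support] at hm ⊢
    intro h0
    apply hm
    rw [hcompat, h0, map_zero]
  have hFsupp : (reprFun b f i).support ⊆ f.support := by
    intro m hm
    simp only [HahnSeries.mem_support, reprFun_coeff] at hm ⊢
    intro h0
    apply hm
    rw [h0, map_zero, Finsupp.coe_zero, Pi.zero_apply]
  rw [hsmul, coeff_mul_left' g.isPWO_support hAsupp,
    coeff_mul_right' f.isPWO_support hFsupp, map_sum, Finsupp.finset_sum_apply]
  refine Finset.sum_congr rfl fun ij _ => ?_
  rw [hcompat, ← Algebra.smul_def, map_smul, Finsupp.smul_apply, reprFun_coeff,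
    smul_eq_mul]

/-- The coefficientwise coordinate equivalence. -/
def reprEquiv (b : Module.Basis ι K L) : LaurentSeries L ≃ₗ[LaurentSeries K] (ι → LaurentSeries K) where
  toFun := reprFun b
  invFun := recFun b
  map_add' f g := by
    funext i
    ext n
    simp [map_add]
  map_smul' g f := by
    funext i
    ext n
    rw [RingHom.id_apply, Pi.smul_apply, smul_eq_mul, reprFun_coeff,
      smul_coeff' hcompat g f i b n]
  left_inv f := by
    ext n
    rw [recFun_coeff]
    simp only [reprFun_coeff]
    exact b.sum_repr (f.coeff n)
  right_inv c := by
    funext i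
    ext n
    rw [reprFun_coeff, recFun_coeff]
    exact congrFun (b.repr_sum_self fun j => (c j).coeff n) i

/-- The induced basis of `L((t))` over `K((t))`. -/
def laurentBasis (b : Module.Basis ι K L) : Module.Basis ι (LaurentSeries K) (LaurentSeries L) :=
  Module.Basis.ofEquivFun (reprEquiv hcompat b)

lemma laurentBasis_repr (b : Module.Basis ι K L) (f : LaurentSeries L) (i : ι) :
    (laurentBasis hcompat b).repr f i = reprFun b f i := by
  rw [laurentBasis, Module.Basis.ofEquivFun_repr_apply]
  rfl

lemma laurentBasis_apply (b : Module.Basis ι K L) (i : ι) :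
    laurentBasis hcompat b i = HahnSeries.single (0 : ℤ) (b i) := by
  refine Module.Basis.apply_eq_iff.mpr ?_
  ext i' n
  rw [laurentBasis_repr, reprFun_coeff, HahnSeries.coeff_single, Finsupp.single_apply]
  by_cases hn : n = 0 <;> by_cases hi : i = i' <;>
    simp [hn, hi, b.repr_self, Finsupp.single_apply, HahnSeries.coeff_one]

include hcompat in
theorem trace_coeff (f : LaurentSeries L) (n : ℤ) :
    (Algebra.trace (LaurentSeries K) (LaurentSeries L) f).coeff n
      = Algebra.trace K L (f.coeff n) := by
  classical
  let b := Module.finBasis K L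
  rw [Algebra.trace_eq_matrix_trace (laurentBasis hcompat b) f,
    Algebra.trace_eq_matrix_trace b (f.coeff n), Matrix.trace, Matrix.trace,
    sum_coeff]
  refine Finset.sum_congr rfl fun i _ => ?_
  rw [Matrix.diag_apply, Matrix.diag_apply, Algebra.leftMulMatrix_eq_repr_mul,
    Algebra.leftMulMatrix_eq_repr_mul,
laurentBasis_repr, reprFun_coeff, laurentBasis_apply, coeff_mul_single_zero]

end Stmt12Aux

end

/-- Let `L/K` be a finite field extension, and identify `L((t))` as a finite
field extension of `K((t))` (the algebra structure is pinned down by being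
coefficientwise the inclusion `K → L`).  Then for every `f ∈ L((t))` the trace
`Tr_{L((t))/K((t))}(f)` is computed coefficientwise by `Tr_{L/K}`:
`(Tr f).coeff n = Tr_{L/K}(f.coeff n)` for all `n`. -/
theorem stmt_12 (K L : Type*) [Field K] [Field L] [Algebra K L]
    [FiniteDimensional K L]
    [Algebra (LaurentSeries K) (LaurentSeries L)]
    (hcompat : ∀ (g : LaurentSeries K) (n : ℤ),
      ((algebraMap (LaurentSeries K) (LaurentSeries L)) g).coeff n
        = algebraMap K L (g.coeff n))
    (f : LaurentSeries L) (n : ℤ) :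
    (Algebra.trace (LaurentSeries K) (LaurentSeries L) f).coeff n
      = Algebra.trace K L (f.coeff n) := by
  exact Stmt12Aux.trace_coeff hcompat f n
end
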